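/- Let p_i denote the i-th prime. Then ∏_{i=ξ}^{⌊e^ξ⌋} (1 - 1/p_i) → 0 as ξ → ∞. -/

import Mathlib

open Filter Real Finset

lemma aux_centralBinom_le (n : ℕ) (hn : 1 ≤ n) :
    Nat.centralBinom n ≤ (2 * n) ^ (Nat.count Nat.Prime (2 * n + 1)) := by
  rw [Nat.count_eq_card_filter_range]
  calc Nat.centralBinom n
      = ∏ p ∈ Finset.range (2 * n + 1), p ^ (Nat.centralBinom n).factorization p :=
        (Nat.prod_pow_factorization_centralBinom n).symm
    _ = ∏ p ∈ (Finset.range (2 * n + 1)).filter Nat.Prime,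
          p ^ (Nat.centralBinom n).factorization p := by
        refine (Finset.prod_subset (Finset.filter_subset _ _) ?_).symm
        intro p hp hnp
        have : ¬ p.Prime := fun h => hnp (Finset.mem_filter.mpr ⟨hp, h⟩)
        rw [Nat.factorization_eq_zero_of_not_prime _ this, pow_zero]
    _ ≤ ∏ _p ∈ (Finset.range (2 * n + 1)).filter Nat.Prime, (2 * n) := by
        refine Finset.prod_le_prod' fun p _ => ?_
        rw [Nat.centralBinom]
        exact Nat.pow_factorization_choose_le (by omega)
    _ = (2 * n) ^ #((Finset.range (2 * n + 1)).filter Nat.Prime) := Finset.prod_const _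

lemma aux_nth_prime_le {n : ℕ} (hn : 2 ≤ n) (i : ℕ)
    (h : ((i : ℝ) + 1) * Real.log (2 * n) ≤ n) : Nat.nth Nat.Prime i ≤ 2 * n := by
  have h1 : 1 ≤ n := by omega
  have hcount : i < Nat.count Nat.Prime (2 * n + 1) := by
    by_contra hc
    push_neg at hc
    set c := Nat.count Nat.Prime (2 * n + 1) with hcdef
    have hnat : 4 ^ n ≤ (2 * n + 1) * (2 * n) ^ c :=
      (Nat.four_pow_le_two_mul_add_one_mul_central_binom n).trans
        (Nat.mul_le_mul_left _ (aux_centralBinom_le n h1))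
    have hreal : (4 : ℝ) ^ n ≤ (2 * n + 1) * (2 * n) ^ c := by exact_mod_cast hnat
    have hlog : (n : ℝ) * Real.log 4 ≤ Real.log (2 * n + 1) + c * Real.log (2 * n) := by
      have := Real.log_le_log (by positivity) hreal
      rwa [Real.log_pow, Real.log_mul (by positivity) (by positivity), Real.log_pow] at this
    have hln : (0:ℝ) ≤ Real.log (2 * n) := Real.log_nonneg (by
      have : (1:ℝ) ≤ n := by exact_mod_cast h1
      linarith)
    have hci : (c : ℝ) * Real.log (2 * n) ≤ i * Real.log (2 * n) := by
      have : (c : ℝ) ≤ i := by exact_mod_cast hc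
      exact mul_le_mul_of_nonneg_right this hln
    have hlt : Real.log (2 * n + 1) ≤ Real.log 2 + Real.log (2 * n) := by
      rw [← Real.log_mul (by norm_num) (by positivity)]
      apply Real.log_le_log (by positivity)
      have : (1:ℝ) ≤ n := by exact_mod_cast h1
      nlinarith
    have hi : (i : ℝ) * Real.log (2 * n) ≤ n - Real.log (2 * n) := by nlinarith
    have h4 : Real.log 4 = 2 * Real.log 2 := by
      rw [show (4:ℝ) = 2 ^ 2 by norm_num, Real.log_pow]; push_cast; ring
    have hn2 : (2:ℝ) ≤ n := by exact_mod_cast hn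
    nlinarith [Real.log_two_gt_d9]
  have := Nat.nth_lt_of_lt_count hcount
  omega

lemma aux_nth_prime_le' (i : ℕ) :
    (Nat.nth Nat.Prime i : ℝ) ≤ 258 * (i + 1) * (Real.log (i + 1) + 1) := by
  set L := Real.log ((i : ℝ) + 1) with hLdef
  have hL : 0 ≤ L := Real.log_nonneg (by exact_mod_cast Nat.le_add_left 1 i)
  have hi1 : (1:ℝ) ≤ (i:ℝ) + 1 := by exact_mod_cast Nat.le_add_left 1 i
  set y := 128 * ((i : ℝ) + 1) * (L + 1) with hydef
  have hy1 : 128 ≤ y := by nlinarith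
  set n := ⌈y⌉₊ with hndef
  have hny : y ≤ n := Nat.le_ceil y
  have hny' : (n : ℝ) ≤ y + 1 := (Nat.ceil_lt_add_one (by linarith)).le
  have hn2 : 2 ≤ n := by
    have : (2:ℝ) ≤ (n:ℝ) := by linarith
    exact_mod_cast this
  have hcond : ((i : ℝ) + 1) * Real.log (2 * n) ≤ n := by
    have h2n : (0:ℝ) < 2 * n := by positivity
    have hlog1 : Real.log (2 * n) ≤ Real.log (4 * y) := by
      apply Real.log_le_log h2n
      linarith
    have h4y : Real.log (4 * y) = 9 * Real.log 2 + L + Real.log (L + 1) := by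
      have : (4:ℝ) * y = 2 ^ 9 * (((i:ℝ) + 1) * (L + 1)) := by rw [hydef]; ring
      rw [this, Real.log_mul (by positivity) (by positivity),
        Real.log_mul (by positivity) (by positivity), Real.log_pow]
      push_cast; ring
    have hlogL : Real.log (L + 1) ≤ L := by
      have := Real.log_le_sub_one_of_pos (show (0:ℝ) < L + 1 by linarith)
      linarith
    have hlog2 : Real.log (2 * n) ≤ 9 * Real.log 2 + 2 * L := by
      rw [h4y] at hlog1; linarith
    have hlt : 9 * Real.log 2 + 2 * L ≤ 128 * (L + 1) := by
      nlinarith [Real.log_two_lt_d9]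
    calc ((i : ℝ) + 1) * Real.log (2 * n) ≤ ((i : ℝ) + 1) * (128 * (L + 1)) := by
          apply mul_le_mul_of_nonneg_left (hlog2.trans hlt) (by linarith)
      _ = y := by rw [hydef]; ring
      _ ≤ n := hny
  have hmain := aux_nth_prime_le hn2 i hcond
  have : (Nat.nth Nat.Prime i : ℝ) ≤ 2 * n := by exact_mod_cast hmain
  have h2n : (2:ℝ) * n ≤ 2 * y + 2 := by linarith
  nlinarith
open Filter Real Finset

noncomputable def auxf (x : ℝ) : ℝ := 1 / (258 * (x + 1) * (Real.log (x + 1) + 1))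
noncomputable def auxG (x : ℝ) : ℝ := (1 / 258) * Real.log (Real.log (x + 1) + 1)

lemma auxf_pos {x : ℝ} (hx : 0 ≤ x) : 0 < auxf x := by
  have h1 : (0:ℝ) < x + 1 := by linarith
  have h2 : 0 ≤ Real.log (x + 1) := Real.log_nonneg (by linarith)
  unfold auxf; positivity

lemma auxf_antitone {a b : ℝ} (ha : 0 ≤ a) (hab : a ≤ b) : auxf b ≤ auxf a := by
  have h1 : (0:ℝ) < a + 1 := by linarith
  have h2 : 0 ≤ Real.log (a + 1) := Real.log_nonneg (by linarith)
  have h3 : Real.log (a + 1) ≤ Real.log (b + 1) := Real.log_le_log (by linarith) (by linarith)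
  unfold auxf
  apply one_div_le_one_div_of_le (by positivity)
  have : a + 1 ≤ b + 1 := by linarith
  nlinarith

lemma auxG_deriv {x : ℝ} (hx : 0 ≤ x) : HasDerivAt auxG (auxf x) x := by
  have hx1 : x + 1 ≠ 0 := by linarith
  have hlx : 0 ≤ Real.log (x + 1) := Real.log_nonneg (by linarith)
  have hl1 : Real.log (x + 1) + 1 ≠ 0 := by linarith
  have h1 : HasDerivAt (fun y : ℝ => y + 1) 1 x := (hasDerivAt_id x).add_const 1
  have h2 : HasDerivAt (fun y : ℝ => Real.log (y + 1)) (1 / (x + 1)) x := by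
    simpa using h1.log hx1
  have h3 : HasDerivAt (fun y : ℝ => Real.log (y + 1) + 1) (1 / (x + 1)) x := h2.add_const 1
  have h4 : HasDerivAt (fun y : ℝ => Real.log (Real.log (y + 1) + 1))
      ((1 / (x + 1)) / (Real.log (x + 1) + 1)) x := by simpa using h3.log hl1
  have h5 := h4.const_mul (1 / 258 : ℝ)
  refine h5.congr_deriv ?_
  unfold auxf
  field_simp

lemma auxf_integral {a b : ℕ} (hab : a ≤ b) :
    ∫ x in (a:ℝ)..(b:ℝ), auxf x = auxG b - auxG a := by
  have hcast : (a:ℝ) ≤ b := by exact_mod_cast hab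
  apply intervalIntegral.integral_eq_sub_of_hasDerivAt
  · intro x hx
    rw [Set.uIcc_of_le hcast] at hx
    exact auxG_deriv ((Nat.cast_nonneg a).trans hx.1)
  · apply ContinuousOn.intervalIntegrable
    rw [Set.uIcc_of_le hcast]
    apply ContinuousOn.div continuousOn_const
    · apply ContinuousOn.mul
      · exact (continuousOn_const.mul ((continuous_id.add continuous_const).continuousOn))
      · apply ContinuousOn.add _ continuousOn_const
        apply ContinuousOn.log ((continuous_id.add continuous_const).continuousOn)
        intro x hx
        have : (0:ℝ) ≤ x := (Nat.cast_nonneg a).trans hx.1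
        intro h; simp at h; linarith
    · intro x hx
      have hx0 : (0:ℝ) ≤ x := (Nat.cast_nonneg a).trans hx.1
      have h2 : 0 ≤ Real.log (x + 1) := Real.log_nonneg (by linarith)
      positivity

lemma auxf_sum_ge {a b : ℕ} (hab : a ≤ b) :
    auxG b - auxG a ≤ ∑ j ∈ Finset.Ico a b, auxf j := by
  rw [← auxf_integral hab]
  apply AntitoneOn.integral_le_sum_Ico hab
  intro u hu v hv huv
  exact auxf_antitone ((Nat.cast_nonneg a).trans hu.1) huv

lemma aux_tendsto_g :
    Filter.Tendsto (fun ξ : ℕ =>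
      Real.exp (-(1/258) * (Real.log ((ξ:ℝ) + 1) - Real.log (Real.log ξ + 1))))
      Filter.atTop (nhds 0) := by
  have t1 : Tendsto (fun ξ : ℕ => Real.log ξ / ((ξ:ℝ) + 1)) atTop (nhds 0) := by
    have h0 := Real.tendsto_pow_log_div_mul_add_atTop 1 1 1 one_ne_zero
    simp only [pow_one, one_mul] at h0
    exact h0.comp tendsto_natCast_atTop_atTop
  have t2 := tendsto_one_div_add_atTop_nhds_zero_nat (𝕜 := ℝ)
  have hB : Tendsto (fun ξ : ℕ => (Real.log ξ + 1) / ((ξ:ℝ) + 1)) atTop (nhds 0) := by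
    have := t1.add t2
    rw [add_zero] at this
    apply this.congr
    intro ξ
    rw [← add_div]
  have hBpos : ∀ᶠ ξ : ℕ in atTop, 0 < (Real.log ξ + 1) / ((ξ:ℝ) + 1) := by
    filter_upwards [eventually_ge_atTop 1] with ξ hξ
    have h1 : (1:ℝ) ≤ ξ := by exact_mod_cast hξ
    have : 0 ≤ Real.log ξ := Real.log_nonneg h1
    positivity
  have hBinv : Tendsto (fun ξ : ℕ => ((Real.log ξ + 1) / ((ξ:ℝ) + 1))⁻¹) atTop atTop :=
    Filter.Tendsto.inv_tendsto_nhdsGT_zero (tendsto_nhdsWithin_iff.mpr ⟨hB, hBpos⟩)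
  have hlog := Real.tendsto_log_atTop.comp hBinv
  have hL : Tendsto (fun ξ : ℕ => Real.log ((ξ:ℝ) + 1) - Real.log (Real.log ξ + 1))
      atTop atTop := by
    apply hlog.congr'
    filter_upwards [eventually_ge_atTop 1] with ξ hξ
    have h1 : (1:ℝ) ≤ ξ := by exact_mod_cast hξ
    have hl : 0 ≤ Real.log ξ := Real.log_nonneg h1
    show Real.log (((Real.log ξ + 1) / ((ξ:ℝ) + 1))⁻¹) = _
    rw [inv_div, Real.log_div (by linarith) (by linarith)]
  have hneg : Tendsto (fun ξ : ℕ =>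
      -(1/258 : ℝ) * (Real.log ((ξ:ℝ) + 1) - Real.log (Real.log ξ + 1))) atTop atBot :=
    hL.const_mul_atTop_of_neg (by norm_num)
  exact Real.tendsto_exp_atBot.comp hneg

lemma aux_sum_lower (ξ : ℕ) (hξ : 1 ≤ ξ) :
    (1/258 : ℝ) * (Real.log ((ξ:ℝ) + 1) - Real.log (Real.log ξ + 1)) ≤
      ∑ i ∈ Finset.Icc ξ ⌊Real.exp ξ⌋₊, (1 / (Nat.nth Nat.Prime (i - 1) : ℝ)) := by
  set M := ⌊Real.exp ξ⌋₊ with hMdef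
  have hξM : ξ ≤ M := by
    apply Nat.le_floor
    have := Real.add_one_le_exp (ξ : ℝ)
    linarith
  have step1 : ∑ j ∈ Finset.Ico (ξ - 1) M, auxf (j : ℝ) ≤
      ∑ i ∈ Finset.Icc ξ M, (1 / (Nat.nth Nat.Prime (i - 1) : ℝ)) := by
    rw [show ∑ j ∈ Finset.Ico (ξ - 1) M, auxf (j : ℝ) =
        ∑ i ∈ Finset.Icc ξ M, auxf ((i - 1 : ℕ) : ℝ) from ?_]
    · apply Finset.sum_le_sum
      intro i _
      have hp2 : (i - 1) + 2 ≤ Nat.nth Nat.Prime (i - 1) := Nat.add_two_le_nth_prime _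
      have hppos : (0:ℝ) < (Nat.nth Nat.Prime (i - 1) : ℝ) := by
        have : 0 < Nat.nth Nat.Prime (i - 1) := by omega
        exact_mod_cast this
      have hub := aux_nth_prime_le' (i - 1)
      unfold auxf
      exact one_div_le_one_div_of_le hppos hub
    · apply Finset.sum_nbij' (fun j => j + 1) (fun i => i - 1)
      · intro j hj
        simp only [Finset.mem_Ico] at hj
        simp only [Finset.mem_Icc]
        omega
      · intro i hi
        simp only [Finset.mem_Icc] at hi
        simp only [Finset.mem_Ico]
        omega
      · intro j hj; omega
      · intro i hi
        simp only [Finset.mem_Icc] at hi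
        omega
      · intro j hj
        simp only [Nat.add_sub_cancel]
  have step2 := auxf_sum_ge (show ξ - 1 ≤ M by omega)
  have hcast : ((ξ - 1 : ℕ) : ℝ) + 1 = (ξ : ℝ) := by
    rw [Nat.cast_sub hξ]; ring
  have hGa : auxG ((ξ - 1 : ℕ) : ℝ) = (1/258) * Real.log (Real.log ξ + 1) := by
    unfold auxG; rw [hcast]
  have hGb : (1/258 : ℝ) * Real.log ((ξ:ℝ) + 1) ≤ auxG (M : ℝ) := by
    have hexp : Real.exp ξ < (M:ℝ) + 1 := Nat.lt_floor_add_one _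
    have hlogM : (ξ:ℝ) ≤ Real.log ((M:ℝ) + 1) := by
      rw [Real.le_log_iff_exp_le (by positivity)]
      linarith
    unfold auxG
    have hξ1 : (0:ℝ) < (ξ:ℝ) + 1 := by positivity
    have := Real.log_le_log hξ1 (show (ξ:ℝ) + 1 ≤ Real.log ((M:ℝ) + 1) + 1 by linarith)
    linarith
  have := step2.trans step1
  rw [hGa] at this
  linarith

theorem prod_one_sub_inv_prime_tendsto_zero :
    Filter.Tendsto
      (fun ξ : ℕ =>
        ∏ i ∈ Finset.Icc ξ ⌊Real.exp ξ⌋₊, (1 - 1 / (Nat.nth Nat.Prime (i - 1) : ℝ)))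
      Filter.atTop (nhds 0) := by
  have hterm : ∀ i : ℕ, (0:ℝ) ≤ 1 - 1 / (Nat.nth Nat.Prime (i - 1) : ℝ) := by
    intro i
    have hp2 : (i - 1) + 2 ≤ Nat.nth Nat.Prime (i - 1) := Nat.add_two_le_nth_prime _
    have h2 : (2:ℝ) ≤ (Nat.nth Nat.Prime (i - 1) : ℝ) := by exact_mod_cast by omega
    have : 1 / (Nat.nth Nat.Prime (i - 1) : ℝ) ≤ 1 / 2 :=
      one_div_le_one_div_of_le (by norm_num) h2
    linarith
  apply tendsto_of_tendsto_of_tendsto_of_le_of_le' tendsto_const_nhds aux_tendsto_g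
  · filter_upwards with ξ
    exact Finset.prod_nonneg fun i _ => hterm i
  · filter_upwards [eventually_ge_atTop 1] with ξ hξ
    calc ∏ i ∈ Finset.Icc ξ ⌊Real.exp ξ⌋₊, (1 - 1 / (Nat.nth Nat.Prime (i - 1) : ℝ))
        ≤ ∏ i ∈ Finset.Icc ξ ⌊Real.exp ξ⌋₊,
            Real.exp (-(1 / (Nat.nth Nat.Prime (i - 1) : ℝ))) := by
          apply Finset.prod_le_prod (fun i _ => hterm i)
          intro i _
          have := Real.add_one_le_exp (-(1 / (Nat.nth Nat.Prime (i - 1) : ℝ)))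
          linarith
      _ = Real.exp (-∑ i ∈ Finset.Icc ξ ⌊Real.exp ξ⌋₊, (1 / (Nat.nth Nat.Prime (i - 1) : ℝ))) := by
          rw [← Real.exp_sum, Finset.sum_neg_distrib]
      _ ≤ Real.exp (-(1/258) * (Real.log ((ξ:ℝ) + 1) - Real.log (Real.log ξ + 1))) := by
          apply Real.exp_le_exp.mpr
          have := aux_sum_lower ξ hξ
          linarith
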